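/- For all real p > 0 and real q, ∫_{-∞}^{∞} exp(-p²t²) · erf(t) · erf(q t) dt = (2/(√π · p)) · arctan( q / (p · √(1 + p² + q²)) ). -/

import Mathlib

open Real MeasureTheory
set_option maxHeartbeats 1000000

noncomputable def erf (x : ℝ) : ℝ := 2 / Real.sqrt π * ∫ s in (0:ℝ)..x, Real.exp (-s^2)

lemma erf_hasDerivAt (x : ℝ) : HasDerivAt erf (2 / Real.sqrt π * Real.exp (-x^2)) x := by
  have hc : Continuous fun s : ℝ => Real.exp (-s^2) := by continuity
  have h := intervalIntegral.integral_hasDerivAt_right (hc.intervalIntegrable 0 x)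
    (hc.stronglyMeasurableAtFilter volume (nhds x)) hc.continuousAt
  exact h.const_mul (2 / Real.sqrt π)

lemma erf_continuous : Continuous erf :=
  continuous_iff_continuousAt.2 fun x => (erf_hasDerivAt x).continuousAt

lemma sqrt_pi_pos : 0 < Real.sqrt π := Real.sqrt_pos.2 pi_pos

lemma abs_erf_le (x : ℝ) : |erf x| ≤ 2 / Real.sqrt π * |x| := by
  have h : ‖∫ s in (0:ℝ)..x, Real.exp (-s^2)‖ ≤ 1 * |x - 0| := by
    apply intervalIntegral.norm_integral_le_of_norm_le_const
    intro s _
    rw [Real.norm_eq_abs, abs_of_pos (Real.exp_pos _)]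
    exact Real.exp_le_one_iff.2 (by nlinarith [sq_nonneg s])
  have h2 : 0 ≤ 2 / Real.sqrt π := by positivity
  calc |erf x| = 2 / Real.sqrt π * |∫ s in (0:ℝ)..x, Real.exp (-s^2)| := by
        rw [erf, abs_mul, abs_of_nonneg h2]
    _ ≤ 2 / Real.sqrt π * |x| := by
        apply mul_le_mul_of_nonneg_left _ h2
        simpa using h

lemma erf_neg (x : ℝ) : erf (-x) = - erf x := by
  unfold erf
  rw [← mul_neg]
  congr 1
  rw [show (∫ s in (0:ℝ)..(-x), Real.exp (-s^2)) = ∫ s in (0:ℝ)..(-x), Real.exp (-(-s)^2) by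
      simp,
    intervalIntegral.integral_comp_neg (a := (0:ℝ)) (b := -x) (fun s => Real.exp (-s^2)),
    neg_neg, neg_zero, intervalIntegral.integral_symm]

lemma erf_tendsto_atTop : Filter.Tendsto erf Filter.atTop (nhds 1) := by
  have hint : IntegrableOn (fun s : ℝ => Real.exp (-s^2)) (Set.Ioi 0) := by
    have := integrable_exp_neg_mul_sq (b := 1) one_pos
    simpa using this.integrableOn
  have h := intervalIntegral_tendsto_integral_Ioi 0 hint Filter.tendsto_id
  have hval : ∫ s in Set.Ioi (0:ℝ), Real.exp (-s^2) = Real.sqrt π / 2 := by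
    have := integral_gaussian_Ioi 1
    simpa using this
  rw [hval] at h
  have := h.const_mul (2 / Real.sqrt π)
  convert this using 2
  · rfl
  rw [eq_comm, div_mul_div_comm, div_eq_one_iff_eq (by positivity)]
  ring

lemma erf_tendsto_atBot : Filter.Tendsto erf Filter.atBot (nhds (-1)) := by
  have h : Filter.Tendsto (fun x : ℝ => -erf (-x)) Filter.atBot (nhds (-1)) := by
    exact (erf_tendsto_atTop.comp Filter.tendsto_neg_atBot_atTop).neg
  convert h using 2 with x
  rw [erf_neg, neg_neg]

lemma lemA (a : ℝ) (ha : 0 < a) :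
    ∫ t : ℝ, t * Real.exp (-a * t^2) * erf t = 1 / (a * Real.sqrt (a + 1)) := by
  have ha1 : (0:ℝ) < a + 1 := by linarith
  have hsa : 0 < Real.sqrt (a + 1) := Real.sqrt_pos.2 ha1
  set H : ℝ → ℝ := fun t =>
    -Real.exp (-a * t^2) / (2 * a) * erf t
      + 1 / (2 * a * Real.sqrt (a + 1)) * erf (Real.sqrt (a + 1) * t) with hH
  have hderiv : ∀ t : ℝ, HasDerivAt H (t * Real.exp (-a * t^2) * erf t) t := by
    intro t
    have h1 : HasDerivAt (fun t : ℝ => -Real.exp (-a * t^2) / (2 * a))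
        (t * Real.exp (-a * t^2)) t := by
      have hinner : HasDerivAt (fun t : ℝ => -a * t^2) (-a * (2 * t)) t := by
        simpa using ((hasDerivAt_pow 2 t).const_mul (-a))
      have := (hinner.exp).neg.div_const (2 * a)
      refine this.congr_deriv ?_
      field_simp
    have h2 := (h1.mul (erf_hasDerivAt t))
    have h3 : HasDerivAt (fun t : ℝ => Real.sqrt (a + 1) * t) (Real.sqrt (a + 1)) t := by
      simpa using (hasDerivAt_id t).const_mul (Real.sqrt (a + 1))
    have h4 := ((erf_hasDerivAt (Real.sqrt (a + 1) * t)).comp t h3).const_mul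
      (1 / (2 * a * Real.sqrt (a + 1)))
    have h5 := h2.add h4
    refine h5.congr_deriv ?_
    have hexp : Real.exp (-(Real.sqrt (a + 1) * t)^2)
        = Real.exp (-a * t^2) * Real.exp (-t^2) := by
      rw [← Real.exp_add]
      congr 1
      rw [mul_pow, Real.sq_sqrt ha1.le]
      ring
    rw [hexp]
    field_simp
    ring
  have hbound : ∀ t : ℝ, ‖t * Real.exp (-a * t^2) * erf t‖
      ≤ 2 / Real.sqrt π * (t^2 * Real.exp (-a * t^2)) := by
    intro t
    rw [Real.norm_eq_abs, abs_mul, abs_mul, abs_of_pos (Real.exp_pos _)]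
    calc |t| * Real.exp (-a * t^2) * |erf t|
        ≤ |t| * Real.exp (-a * t^2) * (2 / Real.sqrt π * |t|) := by
          apply mul_le_mul_of_nonneg_left (abs_erf_le t) (by positivity)
      _ = 2 / Real.sqrt π * (t^2 * Real.exp (-a * t^2)) := by
          rw [show |t| * Real.exp (-a * t^2) * (2 / Real.sqrt π * |t|)
              = 2 / Real.sqrt π * (|t| * |t| * Real.exp (-a * t^2)) by ring,
            abs_mul_abs_self, ← sq]
  have hg : Integrable (fun t : ℝ => 2 / Real.sqrt π * (t^2 * Real.exp (-a * t^2))) := by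
    have := integrable_rpow_mul_exp_neg_mul_sq ha (s := 2) (by norm_num)
    simp only [Real.rpow_two] at this
    exact this.const_mul _
  have hint : Integrable (fun t : ℝ => t * Real.exp (-a * t^2) * erf t) := by
    apply hg.mono'
    · exact (((continuous_id.mul (by continuity)).mul erf_continuous)).aestronglyMeasurable
    · exact Filter.Eventually.of_forall hbound
  have htop : Filter.Tendsto H Filter.atTop (nhds (1 / (2 * a * Real.sqrt (a + 1)))) := by
    have e1 : Filter.Tendsto (fun t : ℝ => -Real.exp (-a * t^2) / (2 * a) * erf t)
        Filter.atTop (nhds 0) := by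
      have : Filter.Tendsto (fun t : ℝ => Real.exp (-a * t^2)) Filter.atTop (nhds 0) := by
        apply Real.tendsto_exp_atBot.comp
        exact (Filter.tendsto_pow_atTop two_ne_zero).const_mul_atTop_of_neg (by linarith)
      have h0 := ((this.neg.div_const (2*a)).mul erf_tendsto_atTop)
      simpa using h0
    have e2 : Filter.Tendsto (fun t : ℝ => 1 / (2 * a * Real.sqrt (a + 1))
        * erf (Real.sqrt (a + 1) * t)) Filter.atTop
        (nhds (1 / (2 * a * Real.sqrt (a + 1)) * 1)) := by
      apply Filter.Tendsto.const_mul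
      exact erf_tendsto_atTop.comp (Filter.Tendsto.const_mul_atTop hsa Filter.tendsto_id)
    have h6 := e1.add e2
    rw [zero_add, mul_one] at h6
    exact h6
  have hbot : Filter.Tendsto H Filter.atBot (nhds (-(1 / (2 * a * Real.sqrt (a + 1))))) := by
    have e1 : Filter.Tendsto (fun t : ℝ => -Real.exp (-a * t^2) / (2 * a) * erf t)
        Filter.atBot (nhds 0) := by
      have : Filter.Tendsto (fun t : ℝ => Real.exp (-a * t^2)) Filter.atBot (nhds 0) := by
        apply Real.tendsto_exp_atBot.comp
        have h2 : Filter.Tendsto (fun t : ℝ => t^2) Filter.atBot Filter.atTop := by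
          have := (Filter.tendsto_pow_atTop (n := 2) two_ne_zero).comp
            (Filter.tendsto_abs_atBot_atTop (G := ℝ))
          simpa [Function.comp_def, sq_abs] using this
        exact h2.const_mul_atTop_of_neg (by linarith)
      have h0 := ((this.neg.div_const (2*a)).mul erf_tendsto_atBot)
      simpa using h0
    have e2 : Filter.Tendsto (fun t : ℝ => 1 / (2 * a * Real.sqrt (a + 1))
        * erf (Real.sqrt (a + 1) * t)) Filter.atBot
        (nhds (1 / (2 * a * Real.sqrt (a + 1)) * (-1))) := by
      apply Filter.Tendsto.const_mul
      exact erf_tendsto_atBot.comp (Filter.Tendsto.const_mul_atBot hsa Filter.tendsto_id)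
    have h6 := e1.add e2
    rw [zero_add, mul_neg_one] at h6
    exact h6
  rw [MeasureTheory.integral_of_hasDerivAt_of_tendsto hderiv hint hbot htop]
  rw [sub_neg_eq_add]
  field_simp
  ring

lemma lemG (p : ℝ) (hp : 0 < p) (v : ℝ) :
    HasDerivAt (fun v : ℝ =>
      2 / (Real.sqrt π * p) * Real.arctan (v / (p * Real.sqrt (1 + p^2 + v^2))))
      (2 / Real.sqrt π * (1 / ((p^2 + v^2) * Real.sqrt (p^2 + v^2 + 1)))) v := by
  have harg : (0:ℝ) < 1 + p^2 + v^2 := by positivity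
  set s := Real.sqrt (1 + p^2 + v^2) with hs
  have hs0 : 0 < s := Real.sqrt_pos.2 harg
  have hs2 : s^2 = 1 + p^2 + v^2 := Real.sq_sqrt harg.le
  have hπ : (0:ℝ) < Real.sqrt π := Real.sqrt_pos.2 pi_pos
  have hr : HasDerivAt (fun v : ℝ => Real.sqrt (1 + p^2 + v^2)) (v / s) v := by
    have hinner : HasDerivAt (fun v : ℝ => 1 + p^2 + v^2) (2*v) v := by
      simpa using ((hasDerivAt_pow 2 v).const_add (1 + p^2))
    have := (Real.hasDerivAt_sqrt (ne_of_gt harg)).comp v hinner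
    refine this.congr_deriv ?_
    rw [← hs]
    field_simp
  have hu : HasDerivAt (fun v : ℝ => v / (p * Real.sqrt (1 + p^2 + v^2)))
      ((1 + p^2) / (p * s^3)) v := by
    have hd := (hasDerivAt_id v).div ((hr.const_mul p)) (by positivity)
    refine hd.congr_deriv ?_
    rw [← hs]
    simp only [id_eq]
    field_simp
    linear_combination hs2
  have harc := (Real.hasDerivAt_arctan (v / (p * s))).comp v hu
  have := harc.const_mul (2 / (Real.sqrt π * p))
  refine this.congr_deriv ?_
  rw [show p^2 + v^2 + 1 = 1 + p^2 + v^2 by ring, ← hs]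
  field_simp
  linear_combination (-p^2) * hs2

lemma main_nonneg (p q : ℝ) (hp : 0 < p) (hq : 0 ≤ q) :
    ∫ t : ℝ, Real.exp (-p^2 * t^2) * erf t * erf (q * t) =
      2 / (Real.sqrt π * p) * Real.arctan (q / (p * Real.sqrt (1 + p^2 + q^2))) := by
  have hπ : (0:ℝ) < Real.sqrt π := sqrt_pi_pos
  set F : ℝ → ℝ → ℝ := fun t v =>
    Real.exp (-p^2 * t^2) * erf t * (2 / Real.sqrt π * (t * Real.exp (-(v*t)^2))) with hF
  have step1 : ∀ t : ℝ, Real.exp (-p^2*t^2) * erf t * erf (q*t)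
      = ∫ v in Set.Ioc 0 q, F t v := by
    intro t
    have h1 : ∫ s in (0:ℝ)..(q*t), Real.exp (-s^2)
        = ∫ v in (0:ℝ)..q, t * Real.exp (-(v*t)^2) := by
      rcases eq_or_ne t 0 with rfl | ht
      · simp
      · have h2 := intervalIntegral.integral_comp_mul_right (a := (0:ℝ)) (b := q)
          (f := fun s => Real.exp (-s^2)) ht
        rw [zero_mul] at h2
        rw [intervalIntegral.integral_const_mul, h2, smul_eq_mul, ← mul_assoc,
          mul_inv_cancel₀ ht, one_mul]
    have h3 : erf (q*t) = ∫ v in (0:ℝ)..q, 2 / Real.sqrt π * (t * Real.exp (-(v*t)^2)) := by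
      rw [erf, h1, ← intervalIntegral.integral_const_mul]
    rw [h3, ← intervalIntegral.integral_const_mul, intervalIntegral.integral_of_le hq]
  have hFcont : Continuous (Function.uncurry F) := by
    have c1 : Continuous fun z : ℝ × ℝ => Real.exp (-p^2*z.1^2) := by continuity
    have c2 : Continuous fun z : ℝ × ℝ => erf z.1 := erf_continuous.comp continuous_fst
    have c3 : Continuous fun z : ℝ × ℝ => z.1 * Real.exp (-(z.2*z.1)^2) := by continuity
    exact (c1.mul c2).mul (continuous_const.mul c3)
  have hg : Integrable (fun z : ℝ × ℝ =>
      ((2 / Real.sqrt π)^2 * (z.1^2 * Real.exp (-p^2*z.1^2))) * 1)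
      (volume.prod (volume.restrict (Set.Ioc 0 q))) := by
    have hga : Integrable (fun t : ℝ =>
        (2 / Real.sqrt π)^2 * (t^2 * Real.exp (-p^2*t^2))) := by
      have := integrable_rpow_mul_exp_neg_mul_sq (b := p^2) (by positivity) (s := 2)
        (by norm_num)
      simp only [Real.rpow_two] at this
      exact this.const_mul _
    have hgb : Integrable (fun _ : ℝ => (1:ℝ)) (volume.restrict (Set.Ioc 0 q)) :=
      integrableOn_const (C := (1:ℝ)) measure_Ioc_lt_top.ne
    exact hga.mul_prod hgb
  have hFint : Integrable (Function.uncurry F)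
      (volume.prod (volume.restrict (Set.Ioc 0 q))) := by
    apply hg.mono' hFcont.aestronglyMeasurable
    filter_upwards with z
    rcases z with ⟨t, v⟩
    simp only [Function.uncurry, hF]
    rw [Real.norm_eq_abs, abs_mul, abs_mul, abs_of_pos (Real.exp_pos _), abs_mul,
      abs_of_nonneg (by positivity : (0:ℝ) ≤ 2 / Real.sqrt π), abs_mul,
      abs_of_pos (Real.exp_pos _), mul_one]
    calc Real.exp (-p^2*t^2) * |erf t| * (2 / Real.sqrt π * (|t| * Real.exp (-(v*t)^2)))
        ≤ Real.exp (-p^2*t^2) * (2 / Real.sqrt π * |t|)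
          * (2 / Real.sqrt π * (|t| * 1)) := by
          apply mul_le_mul
          · exact mul_le_mul_of_nonneg_left (abs_erf_le t) (Real.exp_pos _).le
          · apply mul_le_mul_of_nonneg_left _ (by positivity)
            exact mul_le_mul_of_nonneg_left
              (Real.exp_le_one_iff.2 (by nlinarith [sq_nonneg (v*t)])) (abs_nonneg t)
          · positivity
          · positivity
      _ = (2 / Real.sqrt π)^2 * (|t| * |t| * Real.exp (-p^2*t^2)) := by ring
      _ = (2 / Real.sqrt π)^2 * (t^2 * Real.exp (-p^2*t^2)) := by
          rw [abs_mul_abs_self, ← sq]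
  calc ∫ t : ℝ, Real.exp (-p^2*t^2) * erf t * erf (q*t)
      = ∫ t : ℝ, ∫ v in Set.Ioc 0 q, F t v := by
        congr 1; funext t; exact step1 t
    _ = ∫ v in Set.Ioc 0 q, ∫ t : ℝ, F t v := integral_integral_swap hFint
    _ = ∫ v in Set.Ioc 0 q,
          2 / Real.sqrt π * (1 / ((p^2+v^2) * Real.sqrt (p^2+v^2+1))) := by
        apply setIntegral_congr_fun measurableSet_Ioc
        intro v _
        dsimp only
        have hrw : (fun t : ℝ => F t v)
            = fun t : ℝ => 2 / Real.sqrt π * (t * Real.exp (-(p^2+v^2)*t^2) * erf t) := by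
          funext t
          have hexp : Real.exp (-p^2*t^2) * Real.exp (-(v*t)^2)
              = Real.exp (-(p^2+v^2)*t^2) := by
            rw [← Real.exp_add]; ring_nf
          simp only [hF]
          linear_combination (2 / Real.sqrt π * t * erf t) * hexp
        rw [hrw, MeasureTheory.integral_const_mul, lemA (p^2+v^2) (by positivity)]
    _ = 2 / (Real.sqrt π * p) * Real.arctan (q / (p * Real.sqrt (1 + p^2 + q^2))) := by
        rw [← intervalIntegral.integral_of_le hq]
        have hcont : Continuous fun v : ℝ =>
            2 / Real.sqrt π * (1 / ((p^2+v^2) * Real.sqrt (p^2+v^2+1))) := by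
          apply continuous_const.mul
          apply continuous_const.div
          · exact (continuous_const.add (continuous_pow 2)).mul
              (Real.continuous_sqrt.comp (by continuity))
          · intro v
            have h1 : (0:ℝ) < p^2+v^2 := by positivity
            have h2 : (0:ℝ) < Real.sqrt (p^2+v^2+1) := Real.sqrt_pos.2 (by positivity)
            positivity
        rw [intervalIntegral.integral_eq_sub_of_hasDerivAt
          (fun v _ => lemG p hp v) (hcont.intervalIntegrable 0 q)]
        simp

theorem integral_exp_erf_erf (p q : ℝ) (hp : 0 < p) :
    ∫ t : ℝ, Real.exp (-p^2 * t^2) * erf t * erf (q * t) =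
      2 / (Real.sqrt π * p) * Real.arctan (q / (p * Real.sqrt (1 + p^2 + q^2))) := by
  rcases le_or_gt 0 q with hq | hq
  · exact main_nonneg p q hp hq
  · have h := main_nonneg p (-q) hp (by linarith)
    have hL : ∫ t : ℝ, Real.exp (-p^2 * t^2) * erf t * erf (q * t)
        = -∫ t : ℝ, Real.exp (-p^2 * t^2) * erf t * erf (-q * t) := by
      rw [← integral_neg]
      congr 1; funext t
      rw [show -q * t = -(q*t) by ring, erf_neg]
      ring
    rw [hL, h, show (-q)^2 = q^2 by ring]
    rw [show -q / (p * Real.sqrt (1 + p^2 + q^2)) = -(q / (p * Real.sqrt (1 + p^2 + q^2))) by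
      ring, Real.arctan_neg]
    ring
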